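/- In the separable case σ²_{nk}(K) = d_n(K) d̃_k(K), given ρ > 0, the system of two equations δ = (1/K) tr( D ( ρ (I_N + δ̃ D) )^{-1} ) and δ̃ = (1/K) tr( D̃ ( ρ (I_K + δ D̃) )^{-1} ) admits a unique solution (δ_K(ρ), δ̃_K(ρ)) in nonnegative reals. Moreover, the matrices T_K(−ρ) = (1/ρ)(I_N + δ̃_K(ρ) D)^{-1} and T̃_K(−ρ) = (1/ρ)(I_K + δ_K(ρ) D̃)^{-1} then satisfy the general N+K deterministic system t_n = 1/( ρ (1 + (1/K) tr( D̃_n T̃ )) ), t̃_k = 1/( ρ (1 + (1/K) tr( D_k T )) ) with D_k = d̃_k D and D̃_n = d_n D̃. -/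

import Mathlib

open scoped BigOperators

noncomputable def Saux (κ ρ : ℝ) {m : ℕ} (c : Fin m → ℝ) (x : ℝ) : ℝ :=
  κ * ∑ i, c i / (ρ * (1 + x * c i))

noncomputable def Qaux (κ ρ : ℝ) {m : ℕ} (c : Fin m → ℝ) (x y : ℝ) : ℝ :=
  κ * ∑ i, (c i) ^ 2 / (ρ * (1 + x * c i) * (1 + y * c i))

lemma one_add_pos {x c : ℝ} (hx : 0 ≤ x) (hc : 0 ≤ c) : 0 < 1 + x * c := by positivity

lemma Saux_nonneg {κ ρ : ℝ} (hκ : 0 ≤ κ) (hρ : 0 < ρ) {m : ℕ} {c : Fin m → ℝ}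
    (hc : ∀ i, 0 ≤ c i) {x : ℝ} (hx : 0 ≤ x) : 0 ≤ Saux κ ρ c x := by
  apply mul_nonneg hκ
  apply Finset.sum_nonneg
  intro i _
  have := one_add_pos hx (hc i)
  exact div_nonneg (hc i) (by positivity)

lemma Qaux_nonneg {κ ρ : ℝ} (hκ : 0 ≤ κ) (hρ : 0 < ρ) {m : ℕ} {c : Fin m → ℝ}
    (hc : ∀ i, 0 ≤ c i) {x y : ℝ} (hx : 0 ≤ x) (hy : 0 ≤ y) : 0 ≤ Qaux κ ρ c x y := by
  apply mul_nonneg hκ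
  apply Finset.sum_nonneg
  intro i _
  have h1 := one_add_pos hx (hc i)
  have h2 := one_add_pos hy (hc i)
  positivity

lemma Qaux_symm (κ ρ : ℝ) {m : ℕ} (c : Fin m → ℝ) (x y : ℝ) :
    Qaux κ ρ c x y = Qaux κ ρ c y x := by
  unfold Qaux
  congr 1
  apply Finset.sum_congr rfl
  intro i _
  ring

lemma Saux_diff {κ ρ : ℝ} (hρ : 0 < ρ) {m : ℕ} {c : Fin m → ℝ}
    (hc : ∀ i, 0 ≤ c i) {x y : ℝ} (hx : 0 ≤ x) (hy : 0 ≤ y) :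
    Saux κ ρ c x - Saux κ ρ c y = (y - x) * Qaux κ ρ c x y := by
  unfold Saux Qaux
  rw [← mul_sub, ← Finset.sum_sub_distrib, Finset.mul_sum, Finset.mul_sum]
  rw [Finset.mul_sum]
  apply Finset.sum_congr rfl
  intro i _
  have h1 := one_add_pos hx (hc i)
  have h2 := one_add_pos hy (hc i)
  have h1' : 1 + c i * x ≠ 0 := by rw [mul_comm]; exact h1.ne'
  have h2' : 1 + c i * y ≠ 0 := by rw [mul_comm]; exact h2.ne'
  have hρ' := hρ.ne'
  field_simp
  ring

lemma Saux_antitone {κ ρ : ℝ} (hκ : 0 ≤ κ) (hρ : 0 < ρ) {m : ℕ} {c : Fin m → ℝ}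
    (hc : ∀ i, 0 ≤ c i) {x y : ℝ} (hx : 0 ≤ x) (hxy : x ≤ y) :
    Saux κ ρ c y ≤ Saux κ ρ c x := by
  have hy : 0 ≤ y := hx.trans hxy
  have h := Saux_diff (κ := κ) hρ hc hx hy
  have hQ := Qaux_nonneg hκ hρ hc hx hy
  nlinarith

lemma Saux_key_lt {κ ρ : ℝ} (hκ : 0 < κ) (hρ : 0 < ρ) {m : ℕ} {c : Fin m → ℝ}
    (hc : ∀ i, 0 ≤ c i) (hex : ∃ i, 0 < c i) {x y : ℝ} (hx : 0 ≤ x) (hy : 0 ≤ y) :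
    x * Qaux κ ρ c x y < Saux κ ρ c y := by
  unfold Saux Qaux
  rw [← mul_assoc, mul_comm x κ, mul_assoc, Finset.mul_sum]
  apply mul_lt_mul_of_pos_left _ hκ
  apply Finset.sum_lt_sum
  · intro i _
    have h1 := one_add_pos hx (hc i)
    have h2 := one_add_pos hy (hc i)
    rw [mul_div_assoc' x, div_le_div_iff₀ (by positivity) (by positivity)]
    nlinarith [mul_nonneg (mul_pos hρ h2).le (hc i), mul_nonneg (mul_nonneg (mul_pos hρ h2).le (hc i)) (mul_nonneg hx (hc i))]
  · obtain ⟨i, hi⟩ := hex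
    refine ⟨i, Finset.mem_univ i, ?_⟩
    have h1 := one_add_pos hx (hc i)
    have h2 := one_add_pos hy (hc i)
    rw [mul_div_assoc' x, div_lt_div_iff₀ (by positivity) (by positivity)]
    nlinarith [mul_pos (mul_pos hρ h2) hi, mul_nonneg (mul_nonneg (mul_pos hρ h2).le (hc i)) (mul_nonneg hx (hc i))]

lemma Qaux_ne_zero_exists {κ ρ : ℝ} {m : ℕ} {c : Fin m → ℝ}
    (hc : ∀ i, 0 ≤ c i) {x y : ℝ} (h : Qaux κ ρ c x y ≠ 0) : ∃ i, 0 < c i := by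
  by_contra hno
  push_neg at hno
  apply h
  unfold Qaux
  have : ∀ i, c i = 0 := fun i => le_antisymm (hno i) (hc i)
  simp [this]

lemma Saux_continuousOn (κ ρ : ℝ) (hρ : 0 < ρ) {m : ℕ} (c : Fin m → ℝ)
    (hc : ∀ i, 0 ≤ c i) : ContinuousOn (Saux κ ρ c) (Set.Ici 0) := by
  unfold Saux
  apply ContinuousOn.mul continuousOn_const
  apply continuousOn_finset_sum
  intro i _
  apply ContinuousOn.div continuousOn_const
  · fun_prop
  · intro x hx
    have := one_add_pos (Set.mem_Ici.mp hx) (hc i)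
    positivity

lemma sol_unique {κ ρ : ℝ} (hκ : 0 < κ) (hρ : 0 < ρ) {m k : ℕ}
    {c : Fin m → ℝ} {e : Fin k → ℝ} (hc : ∀ i, 0 ≤ c i) (he : ∀ i, 0 ≤ e i)
    {x1 y1 x2 y2 : ℝ} (hx1 : 0 ≤ x1) (hy1 : 0 ≤ y1) (hx2 : 0 ≤ x2) (hy2 : 0 ≤ y2)
    (hcx1 : x1 = Saux κ ρ c y1) (hey1 : y1 = Saux κ ρ e x1)
    (hcx2 : x2 = Saux κ ρ c y2) (hey2 : y2 = Saux κ ρ e x2) :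
    x1 = x2 ∧ y1 = y2 := by
  set Qf := Qaux κ ρ c y1 y2 with hQf
  set Qg := Qaux κ ρ e x1 x2 with hQg
  have hQfnn : 0 ≤ Qf := Qaux_nonneg hκ.le hρ hc hy1 hy2
  have hQgnn : 0 ≤ Qg := Qaux_nonneg hκ.le hρ he hx1 hx2
  have hA : x1 - x2 = (y2 - y1) * Qf := by
    rw [hcx1, hcx2]; exact Saux_diff hρ hc hy1 hy2
  have hB : y1 - y2 = (x2 - x1) * Qg := by
    rw [hey1, hey2]; exact Saux_diff hρ he hx1 hx2
  by_cases hxx : x1 = x2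
  · refine ⟨hxx, ?_⟩
    have : y1 - y2 = 0 := by rw [hB, hxx]; ring
    linarith
  · exfalso
    have hprod : Qg * Qf = 1 := by
      have h0 : (x1 - x2) * (Qg * Qf - 1) = 0 := by
        have : y2 - y1 = (x1 - x2) * Qg := by linarith [hB]
        rw [this] at hA
        linarith [hA]
      rcases mul_eq_zero.mp h0 with h | h
      · exact absurd (sub_eq_zero.mp h) hxx
      · linarith
    have hQfne : Qf ≠ 0 := by intro h; rw [h, mul_zero] at hprod; norm_num at hprod
    have hQgne : Qg ≠ 0 := by intro h; rw [h, zero_mul] at hprod; norm_num at hprod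
    have hcex : ∃ i, 0 < c i := Qaux_ne_zero_exists hc hQfne
    have heex : ∃ i, 0 < e i := Qaux_ne_zero_exists he hQgne
    have I1 : y1 * Qf < x2 := by
      rw [hcx2]; exact Saux_key_lt hκ hρ hc hcex hy1 hy2
    have I2 : y2 * Qf < x1 := by
      rw [hcx1, hQf, Qaux_symm]; exact Saux_key_lt hκ hρ hc hcex hy2 hy1
    have I3 : x1 * Qg < y2 := by
      rw [hey2]; exact Saux_key_lt hκ hρ he heex hx1 hx2
    have I4 : x2 * Qg < y1 := by
      rw [hey1, hQg, Qaux_symm]; exact Saux_key_lt hκ hρ he heex hx2 hx1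
    have P1 : x1 * y1 < x2 * y2 := by
      have h := mul_lt_mul'' I1 I3 (mul_nonneg hy1 hQfnn) (mul_nonneg hx1 hQgnn)
      calc x1 * y1 = (y1 * Qf) * (x1 * Qg) := by linear_combination (-(x1 * y1)) * hprod
        _ < x2 * y2 := h
    have P2 : x2 * y2 < x1 * y1 := by
      have h := mul_lt_mul'' I2 I4 (mul_nonneg hy2 hQfnn) (mul_nonneg hx2 hQgnn)
      calc x2 * y2 = (y2 * Qf) * (x2 * Qg) := by linear_combination (-(x2 * y2)) * hprod
        _ < x1 * y1 := h
    exact lt_irrefl _ (P1.trans P2)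

lemma sol_exists {κ ρ : ℝ} (hκ : 0 < κ) (hρ : 0 < ρ) {m k : ℕ}
    {c : Fin m → ℝ} {e : Fin k → ℝ} (hc : ∀ i, 0 ≤ c i) (he : ∀ i, 0 ≤ e i) :
    ∃ x y : ℝ, 0 ≤ x ∧ 0 ≤ y ∧ x = Saux κ ρ c y ∧ y = Saux κ ρ e x := by
  set M := Saux κ ρ e 0 with hM
  have hM0 : 0 ≤ M := Saux_nonneg hκ.le hρ he le_rfl
  set h : ℝ → ℝ := fun y => Saux κ ρ e (Saux κ ρ c y) - y with hh
  have hmaps : ∀ y ∈ Set.Icc (0:ℝ) M, Saux κ ρ c y ∈ Set.Ici (0:ℝ) :=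
    fun y hy => Set.mem_Ici.mpr (Saux_nonneg hκ.le hρ hc hy.1)
  have hcont : ContinuousOn h (Set.Icc 0 M) := by
    apply ContinuousOn.sub _ continuousOn_id
    apply ContinuousOn.comp (Saux_continuousOn κ ρ hρ e he)
      ((Saux_continuousOn κ ρ hρ c hc).mono (Set.Icc_subset_Ici_self)) hmaps
  have h0 : 0 ≤ h 0 := by
    simp only [hh, sub_zero]
    exact Saux_nonneg hκ.le hρ he (Saux_nonneg hκ.le hρ hc le_rfl)
  have hM2 : h M ≤ 0 := by
    simp only [hh]
    have : Saux κ ρ e (Saux κ ρ c M) ≤ Saux κ ρ e 0 :=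
      Saux_antitone hκ.le hρ he le_rfl (Saux_nonneg hκ.le hρ hc hM0)
    linarith
  have := intermediate_value_Icc' hM0 hcont
  have h0mem : (0:ℝ) ∈ Set.Icc (h M) (h 0) := ⟨hM2, h0⟩
  obtain ⟨y, hy, hy0⟩ := this h0mem
  refine ⟨Saux κ ρ c y, y, Saux_nonneg hκ.le hρ hc hy.1, hy.1, rfl, ?_⟩
  simp only [hh] at hy0
  linarith

/-- Separable case: the system of two equations
`δ = (1/K) tr (D (ρ (I_N + δ̃ D))⁻¹)`, `δ̃ = (1/K) tr (D̃ (ρ (I_K + δ D̃))⁻¹)`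
(written with the diagonal matrices `D = diag d`, `D̃ = diag d̃`) admits a unique solution in
nonnegative reals; moreover for any such solution the matrices
`T(-ρ) = (1/ρ)(I + δ̃ D)⁻¹` and `T̃(-ρ) = (1/ρ)(I + δ D̃)⁻¹`, i.e. the diagonal entries
`t_n = 1/(ρ(1 + δ̃ d_n))` and `t̃_k = 1/(ρ(1 + δ d̃_k))`, satisfy the general deterministic
system with `D_k = d̃_k D` and `D̃_n = d_n D̃`. -/
theorem stmt_4 (N K : ℕ) (hN : 0 < N) (hK : 0 < K) (ρ : ℝ) (hρ : 0 < ρ)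
    (d : Fin N → ℝ) (dt : Fin K → ℝ)
    (hd : ∀ n, 0 ≤ d n) (hdt : ∀ k, 0 ≤ dt k) :
    (∃! q : ℝ × ℝ, (0 ≤ q.1 ∧ 0 ≤ q.2) ∧
        q.1 = (1 / (K : ℝ)) * ∑ n, d n / (ρ * (1 + q.2 * d n)) ∧
        q.2 = (1 / (K : ℝ)) * ∑ k, dt k / (ρ * (1 + q.1 * dt k))) ∧
    (∀ δ δt : ℝ, 0 ≤ δ → 0 ≤ δt →
        δ = (1 / (K : ℝ)) * ∑ n, d n / (ρ * (1 + δt * d n)) →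
        δt = (1 / (K : ℝ)) * ∑ k, dt k / (ρ * (1 + δ * dt k)) →
        (∀ n, 1 / (ρ * (1 + δt * d n)) =
            1 / (ρ * (1 + (1 / (K : ℝ)) *
              ∑ k, (d n * dt k) * (1 / (ρ * (1 + δ * dt k)))))) ∧
        (∀ k, 1 / (ρ * (1 + δ * dt k)) =
            1 / (ρ * (1 + (1 / (K : ℝ)) *
              ∑ n, (dt k * d n) * (1 / (ρ * (1 + δt * d n))))))) := by
  have hκ : (0:ℝ) < 1 / (K : ℝ) := by positivity
  constructor
  · -- existence and uniqueness
    obtain ⟨x, y, hx, hy, hxe, hye⟩ := sol_exists (c := d) (e := dt) hκ hρ hd hdt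
    refine ⟨(x, y), ⟨⟨hx, hy⟩, hxe, hye⟩, ?_⟩
    rintro ⟨x', y'⟩ ⟨⟨hx', hy'⟩, hxe', hye'⟩
    obtain ⟨h1, h2⟩ := sol_unique hκ hρ hd hdt hx' hy' hx hy hxe' hye' hxe hye
    exact Prod.ext h1 h2
  · -- the "moreover" part
    intro δ δt hδ hδt hδe hδte
    constructor
    · intro n
      have key : (1 / (K : ℝ)) * ∑ k, (d n * dt k) * (1 / (ρ * (1 + δ * dt k)))
          = δt * d n := by
        rw [hδte]
        rw [Finset.mul_sum, Finset.mul_sum, Finset.sum_mul]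
        apply Finset.sum_congr rfl
        intro k _
        ring
      rw [key]
    · intro k
      have key : (1 / (K : ℝ)) * ∑ n, (dt k * d n) * (1 / (ρ * (1 + δt * d n)))
          = δ * dt k := by
        rw [hδe]
        rw [Finset.mul_sum, Finset.mul_sum, Finset.sum_mul]
        apply Finset.sum_congr rfl
        intro n _
        ring
      rw [key]
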